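/- arXiv:math/0009215 — 4 statements merged into one kernel-verified Lean document; each statement's English description precedes it below -/
import Mathlib

section
/- Let c ∈ (−1,0) and put ψ := h_c, where h_a(z) := (z − a)/(1 − conj(a)·z). For a ∈ E let φ_a := h_{−a} ∘ (−id) ∘ h_{h_a(ψ(a))} ∘ h_a, which is the automorphism of E swapping a and ψ(a) (φ_a(a) = ψ(a), φ_a(ψ(a)) = a, φ_a ∘ φ_a = id). Then φ_a'(a) = −ψ'(a) if and only if a ∈ ℝ. -/
open Set Metric Complex

noncomputable section

/-- The open unit disc `E` in `ℂ`. -/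
def unitDisc : Set ℂ := Metric.ball (0 : ℂ) 1

/-- The Kobayashi–Royden pseudometric of a set `D` in a complex normed space:
`κ_D(z;X) = inf {|α| : ∃ holomorphic f : E → D, f(0) = z, α·f'(0) = X}`. -/
def kobayashi {V : Type*} [NormedAddCommGroup V] [NormedSpace ℂ V]
    (D : Set V) (z X : V) : ℝ :=
  sInf {r : ℝ | ∃ (α : ℂ) (f : ℂ → V), ‖α‖ = r ∧
    DifferentiableOn ℂ f unitDisc ∧ MapsTo f unitDisc D ∧
    f 0 = z ∧ α • deriv f 0 = X}

/-- The Hahn pseudometric of a set `D` in a complex normed space: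
`h_D(z;X) = inf {|α| : ∃ injective holomorphic f : E → D, f(0) = z, α·f'(0) = X}`. -/
def hahn {V : Type*} [NormedAddCommGroup V] [NormedSpace ℂ V]
    (D : Set V) (z X : V) : ℝ :=
  sInf {r : ℝ | ∃ (α : ℂ) (f : ℂ → V), ‖α‖ = r ∧
    DifferentiableOn ℂ f unitDisc ∧ MapsTo f unitDisc D ∧ InjOn f unitDisc ∧
    f 0 = z ∧ α • deriv f 0 = X}

/-- An automorphism of the unit disc: a biholomorphic map of `E` onto itself. -/
def IsDiscAut (φ : ℂ → ℂ) : Prop :=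
  DifferentiableOn ℂ φ unitDisc ∧ MapsTo φ unitDisc unitDisc ∧
  ∃ ψ : ℂ → ℂ, DifferentiableOn ℂ ψ unitDisc ∧ MapsTo ψ unitDisc unitDisc ∧
    (∀ z ∈ unitDisc, ψ (φ z) = z) ∧ (∀ z ∈ unitDisc, φ (ψ z) = z)

/-- The Möbius automorphism `h_a(z) = (z - a)/(1 - conj(a)·z)` of the unit disc. -/
def hMob (a z : ℂ) : ℂ := (z - a) / (1 - (starRingEnd ℂ) a * z)

lemma poly_iff (c : ℝ) (hc1 : -1 < c) (hc2 : c < 0) (a A : ℂ)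
    (hA : A = (starRingEnd ℂ) a) (ha : Complex.normSq a < 1) :
    (((1 - A*a - (c:ℂ)*(a - A)) * (1 - A*a + (c:ℂ)*(a - A))
      - ((c:ℂ)*(a^2-1)) * ((c:ℂ)*(A^2-1))) * (1 - A*a - (c:ℂ)*(a - A))^2
    = (1 - (c:ℂ)*(c:ℂ)) * ((1 - A*a - (c:ℂ)*(a - A)) * (1 - A*a + (c:ℂ)*(a - A)))
      * (1 - A*a)^2) ↔ a.im = 0 := by
  have hAa : (starRingEnd ℂ) A = a := by rw [hA]; exact Complex.conj_conj a
  have ht : (1:ℂ) - A * a ≠ 0 := by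
    intro h0
    have := congrArg Complex.re h0
    simp [hA, Complex.sub_re, Complex.mul_re, Complex.conj_re, Complex.conj_im] at this
    nlinarith [Complex.normSq_apply a, ha]
  constructor
  · intro h
    have hconj := congrArg (starRingEnd ℂ) h
    simp only [map_mul, map_sub, map_add, map_pow, map_one, Complex.conj_ofReal,
      hAa, ← hA] at hconj
    have key : ((1 - A*a - (c:ℂ)*(a-A)) * (1 - A*a + (c:ℂ)*(a-A))
        - ((c:ℂ)*(a^2-1))*((c:ℂ)*(A^2-1))) * ((c:ℂ)*(a-A)) * ((1:ℂ) - A*a) = 0 := by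
      linear_combination ((1:ℂ)/4)*hconj - ((1:ℂ)/4)*h
    have key2 := (mul_eq_zero.mp key).resolve_right ht
    rcases mul_eq_zero.mp key2 with hK | hs
    · exfalso
      have hc' : (1:ℂ) - (c:ℂ)*(c:ℂ) ≠ 0 := by
        intro h0
        have := congrArg Complex.re h0
        push_cast at this
        simp at this
        nlinarith
      have hDD : ((1:ℂ) - (c:ℂ)*(c:ℂ)) *
          ((1 - A*a - (c:ℂ)*(a-A)) * (1 - A*a + (c:ℂ)*(a-A))) * (1 - A*a)^2 = 0 := by
        linear_combination (1 - A*a - (c:ℂ)*(a-A))^2 * hK - h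
      have hDD2 : (1 - A*a - (c:ℂ)*(a-A)) * (1 - A*a + (c:ℂ)*(a-A)) = 0 := by
        rcases mul_eq_zero.mp hDD with h1 | h2
        · exact (mul_eq_zero.mp h1).resolve_left hc'
        · exact absurd (pow_eq_zero_iff two_ne_zero |>.mp h2) ht
      have hcD : (starRingEnd ℂ) (1 - A*a - (c:ℂ)*(a-A)) = 1 - A*a + (c:ℂ)*(a-A) := by
        simp only [map_sub, map_add, map_mul, map_one, Complex.conj_ofReal, hAa, ← hA]
        ring
      have hD0 : (1 - A*a - (c:ℂ)*(a-A)) = 0 := by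
        rw [← hcD, Complex.mul_conj] at hDD2
        exact Complex.normSq_eq_zero.mp (by exact_mod_cast hDD2)
      have := congrArg Complex.re hD0
      simp [hA, Complex.sub_re, Complex.add_re, Complex.mul_re, Complex.conj_re,
        Complex.conj_im, Complex.ofReal_re, Complex.ofReal_im] at this
      nlinarith [Complex.normSq_apply a, ha]
    · rcases mul_eq_zero.mp hs with hc0 | haA
      · exact absurd (by exact_mod_cast hc0 : c = 0) (by linarith)
      · have hAa' : A = a := by linear_combination -haA
        rw [hA] at hAa'
        exact Complex.conj_eq_iff_im.mp hAa'
  · intro him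
    have hA' : A = a := by rw [hA]; exact Complex.conj_eq_iff_im.mpr him
    rw [hA']
    ring

lemma hasDerivAt_hMob (w p : ℂ) (h : (1:ℂ) - (starRingEnd ℂ) w * p ≠ 0) :
    HasDerivAt (hMob w) ((1 - (starRingEnd ℂ) w * w) / (1 - (starRingEnd ℂ) w * p)^2) p := by
  have h1 : HasDerivAt (fun z : ℂ => z - w) 1 p := (hasDerivAt_id p).sub_const w
  have h2 : HasDerivAt (fun z : ℂ => 1 - (starRingEnd ℂ) w * z) (-((starRingEnd ℂ) w)) p := by
    simpa using (((hasDerivAt_id p).const_mul ((starRingEnd ℂ) w)).const_sub 1)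
  have h3 := h1.div h2 h
  exact h3.congr_deriv (by ring)

/-- For `c ∈ (-1,0)`, `ψ := h_c`, and `a ∈ E`, the involutive automorphism
`φ_a := h_{-a} ∘ (-id) ∘ h_{h_a(ψ(a))} ∘ h_a` swapping `a` and `ψ(a)` satisfies
`φ_a'(a) = -ψ'(a)` iff `a ∈ ℝ`. -/
theorem stmt15 (c : ℝ) (hc : c ∈ Set.Ioo (-1 : ℝ) 0) (a : ℂ) (ha : a ∈ unitDisc) :
    deriv (fun z => hMob (-a) (-(hMob (hMob a (hMob (c : ℂ) a)) (hMob a z)))) a =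
      -deriv (hMob (c : ℂ)) a ↔ a.im = 0 := by
  obtain ⟨hc1, hc2⟩ := hc
  have hna : Complex.normSq a < 1 := by
    have : ‖a‖ < 1 := by simpa using mem_ball_zero_iff.mp ha
    rw [← Complex.sq_norm]
    nlinarith [norm_nonneg a]
  set A := (starRingEnd ℂ) a with hA
  have ht : (1:ℂ) - A * a ≠ 0 := by
    intro h0
    have := congrArg Complex.re h0
    simp [hA, Complex.sub_re, Complex.mul_re, Complex.conj_re, Complex.conj_im] at this
    nlinarith [Complex.normSq_apply a]
  have hca : (1:ℂ) - (c:ℂ) * a ≠ 0 := by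
    intro h0
    have h1 : (c:ℂ) * a = 1 := by linear_combination -h0
    have := congrArg (fun z : ℂ => ‖z‖) h1
    simp [norm_mul] at this
    have h2 : ‖a‖ < 1 := mem_ball_zero_iff.mp ha
    have h3 : |c| < 1 := abs_lt.mpr ⟨hc1, by linarith⟩
    nlinarith [norm_nonneg a, abs_nonneg c]
  -- b = N / D
  have hD : (1:ℂ) - A*a - (c:ℂ)*(a - A) ≠ 0 := by
    intro h0
    have := congrArg Complex.re h0
    simp [hA, Complex.sub_re, Complex.mul_re, Complex.conj_re, Complex.conj_im,
      Complex.ofReal_re, Complex.ofReal_im] at this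
    nlinarith [Complex.normSq_apply a]
  have hb : hMob a (hMob (c:ℂ) a) = ((c:ℂ)*(a^2-1)) / (1 - A*a - (c:ℂ)*(a - A)) := by
    unfold hMob
    rw [Complex.conj_ofReal, ← hA]
    rw [div_eq_div_iff ?_ hD]
    · linear_combination (1 - A*a) * div_mul_cancel₀ (a - (c:ℂ)) hca
    · intro h0
      apply hD
      have : ((1:ℂ) - A*a - (c:ℂ)*(a-A)) = (1 - A * ((a - ↑c) / (1 - ↑c * a))) * (1 - (c:ℂ)*a) := by
        linear_combination A * div_mul_cancel₀ (a - (c:ℂ)) hca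
      rw [this, h0, zero_mul]
  -- abbreviations (as expressions)
  have hAa : (starRingEnd ℂ) A = a := Complex.conj_conj a
  have hBb : (starRingEnd ℂ) (hMob a (hMob (c:ℂ) a))
      = ((c:ℂ)*(A^2-1)) / (1 - A*a + (c:ℂ)*(a - A)) := by
    rw [hb, map_div₀]
    congr 1
    · simp only [map_mul, map_sub, map_pow, map_one, Complex.conj_ofReal, ← hA]
    · simp only [map_sub, map_add, map_mul, map_one, Complex.conj_ofReal, hAa, ← hA]
      ring
  have hDb : (1:ℂ) - A*a + (c:ℂ)*(a - A) ≠ 0 := by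
    intro h0
    apply hD
    have hcD : (starRingEnd ℂ) ((1:ℂ) - A*a + (c:ℂ)*(a - A)) = 1 - A*a - (c:ℂ)*(a - A) := by
      simp only [map_sub, map_add, map_mul, map_one, Complex.conj_ofReal, hAa, ← hA]
      ring
    rw [← hcD, h0, map_zero]
  have h1Ab : (1:ℂ) - (starRingEnd ℂ) (-a) * (hMob a (hMob (c:ℂ) a)) ≠ 0 := by
    rw [map_neg, hb, ← hA]
    have : (1:ℂ) - -A * ((c:ℂ)*(a^2-1) / (1 - A*a - (c:ℂ)*(a - A)))
        = ((1 - A*a)*(1 - (c:ℂ)*a)) / (1 - A*a - (c:ℂ)*(a - A)) := by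
      field_simp
      ring
    rw [this]
    exact div_ne_zero (mul_ne_zero ht hca) hD
  -- derivative chain
  have hg1 : HasDerivAt (hMob a) ((1 - A*a)/(1 - A*a)^2) a := by
    have := hasDerivAt_hMob a a (by rw [← hA]; exact ht)
    rwa [← hA] at this
  have e1 : hMob a a = 0 := by unfold hMob; simp
  have hg2' : HasDerivAt (hMob (hMob a (hMob (c:ℂ) a)))
      ((1 - (starRingEnd ℂ) (hMob a (hMob (c:ℂ) a)) * (hMob a (hMob (c:ℂ) a)))
        / (1 - (starRingEnd ℂ) (hMob a (hMob (c:ℂ) a)) * 0)^2) (hMob a a) := by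
    rw [e1]
    exact hasDerivAt_hMob _ 0 (by simp)
  have hg21 := HasDerivAt.comp a hg2' hg1
  have hneg := hg21.neg
  have e2 : -((hMob (hMob a (hMob (c:ℂ) a)) ∘ hMob a) a) = hMob a (hMob (c:ℂ) a) := by
    simp only [Function.comp_apply, e1]
    unfold hMob
    simp
  have hg4 : HasDerivAt (hMob (-a))
      ((1 - (starRingEnd ℂ) (-a) * (-a)) / (1 - (starRingEnd ℂ) (-a) * (hMob a (hMob (c:ℂ) a)))^2)
      ((fun z => -((hMob (hMob a (hMob (c:ℂ) a)) ∘ hMob a) z)) a) := by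
    rw [show ((fun z => -((hMob (hMob a (hMob (c:ℂ) a)) ∘ hMob a) z)) a) = hMob a (hMob (c:ℂ) a) from e2]
    exact hasDerivAt_hMob (-a) _ h1Ab
  have hfinal := HasDerivAt.comp a hg4 hneg
  simp only [Function.comp_def, Pi.neg_apply] at hfinal
  rw [hfinal.deriv]
  have hrhs : deriv (hMob (c:ℂ)) a = (1 - (c:ℂ)*(c:ℂ))/(1 - (c:ℂ)*a)^2 := by
    have hca' : (1:ℂ) - (starRingEnd ℂ) (c:ℂ) * a ≠ 0 := by rwa [Complex.conj_ofReal]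
    have := (hasDerivAt_hMob (c:ℂ) a hca').deriv
    rwa [Complex.conj_ofReal] at this
  rw [hrhs]
  -- simplify derivative value to a single fraction
  have hval : (1 - (starRingEnd ℂ) (-a) * (-a)) / (1 - (starRingEnd ℂ) (-a) * (hMob a (hMob (c:ℂ) a)))^2 *
      (-((1 - (starRingEnd ℂ) (hMob a (hMob (c:ℂ) a)) * (hMob a (hMob (c:ℂ) a)))
        / (1 - (starRingEnd ℂ) (hMob a (hMob (c:ℂ) a)) * 0)^2 * ((1 - A*a)/(1 - A*a)^2)))
      = -(((1 - A*a - (c:ℂ)*(a - A)) * (1 - A*a + (c:ℂ)*(a - A))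
            - ((c:ℂ)*(a^2-1)) * ((c:ℂ)*(A^2-1))) * (1 - A*a - (c:ℂ)*(a - A))^2)
        / ((1 - A*a - (c:ℂ)*(a - A)) * (1 - A*a + (c:ℂ)*(a - A))
            * (1 - A*a)^2 * (1 - (c:ℂ)*a)^2) := by
    rw [hBb, hb, map_neg, ← hA]
    have hDAN : (1:ℂ) - A*a - (c:ℂ)*(a - A) + A*((c:ℂ)*(a^2-1)) ≠ 0 := by
      have : (1:ℂ) - A*a - (c:ℂ)*(a - A) + A*((c:ℂ)*(a^2-1)) = (1 - A*a)*(1 - (c:ℂ)*a) := by ring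
      rw [this]
      exact mul_ne_zero ht hca
    rw [show (1:ℂ) - -A * ((c:ℂ)*(a^2-1) / (1 - A*a - (c:ℂ)*(a - A)))
        = ((1 - A*a)*(1 - (c:ℂ)*a)) / (1 - A*a - (c:ℂ)*(a - A)) by
      rw [eq_div_iff hD]
      linear_combination A * div_mul_cancel₀ ((c:ℂ)*(a^2-1)) hD]
    rw [mul_zero, sub_zero]
    field_simp
  rw [hval]
  rw [show -((1 - (c:ℂ)*(c:ℂ))/(1 - (c:ℂ)*a)^2) = (-(1 - (c:ℂ)*(c:ℂ)))/(1 - (c:ℂ)*a)^2 from (neg_div _ _).symm]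
  rw [div_eq_div_iff (mul_ne_zero (mul_ne_zero (mul_ne_zero hD hDb) (pow_ne_zero 2 ht)) (pow_ne_zero 2 hca)) (pow_ne_zero 2 hca)]
  rw [← poly_iff c hc1 hc2 a A hA hna]
  constructor
  · intro h
    have h2 : (((1 - A*a - (c:ℂ)*(a - A)) * (1 - A*a + (c:ℂ)*(a - A))
          - ((c:ℂ)*(a^2-1)) * ((c:ℂ)*(A^2-1))) * (1 - A*a - (c:ℂ)*(a - A))^2) * (1 - (c:ℂ)*a)^2
        = ((1 - (c:ℂ)*(c:ℂ)) * ((1 - A*a - (c:ℂ)*(a - A)) * (1 - A*a + (c:ℂ)*(a - A)))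
          * (1 - A*a)^2) * (1 - (c:ℂ)*a)^2 := by linear_combination -h
    exact mul_right_cancel₀ (pow_ne_zero 2 hca) h2
  · intro h
    linear_combination (-(1 - (c:ℂ)*a)^2) * h
end
end

section
/- Let c ∈ (−1,0) and put ψ := h_c, where h_a(z) := (z − a)/(1 − conj(a)·z). For every a ∈ E \ ℝ, the automorphism φ of E determined by φ(a) = ψ(a) and φ(ψ(a)) = a satisfies φ'(a) ≠ ψ'(a) and φ'(a) ≠ −ψ'(a). -/
open Set Metric Complex

noncomputable section

lemma mem_unitDisc {z : ℂ} : z ∈ unitDisc ↔ ‖z‖ < 1 := by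
  simp [unitDisc, mem_ball_zero_iff]

lemma one_sub_mul_ne_zero {b z : ℂ} (hb : ‖b‖ < 1) (hz : ‖z‖ < 1) :
    1 - b * z ≠ 0 := by
  intro h
  have h1 : b * z = 1 := by linear_combination -h
  have : ‖b * z‖ < 1 := by
    rw [norm_mul]
    calc ‖b‖ * ‖z‖ ≤ 1 * ‖z‖ :=
      mul_le_mul_of_nonneg_right hb.le (norm_nonneg z)
    _ < 1 := by rwa [one_mul]
  rw [h1] at this; simp at this

lemma one_sub_conj_mul_ne_zero {b z : ℂ} (hb : ‖b‖ < 1) (hz : ‖z‖ < 1) :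
    1 - (starRingEnd ℂ) b * z ≠ 0 :=
  one_sub_mul_ne_zero (by rwa [Complex.norm_conj]) hz

lemma hMob_abs_lt {b z : ℂ} (hb : ‖b‖ < 1) (hz : ‖z‖ < 1) :
    ‖hMob b z‖ < 1 := by
  have hden := one_sub_conj_mul_ne_zero hb hz
  have hdenpos : 0 < ‖1 - (starRingEnd ℂ) b * z‖ := by
    simpa [norm_pos_iff] using hden
  rw [hMob, norm_div, div_lt_one hdenpos]
  have key : Complex.normSq (z - b) < Complex.normSq (1 - (starRingEnd ℂ) b * z) := by
    have h1 : Complex.normSq (1 - (starRingEnd ℂ) b * z) - Complex.normSq (z - b)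
        = (1 - Complex.normSq b) * (1 - Complex.normSq z) := by
      simp only [Complex.normSq_apply, Complex.sub_re, Complex.sub_im, Complex.mul_re,
        Complex.mul_im, Complex.one_re, Complex.one_im, Complex.conj_re, Complex.conj_im]
      ring
    have hb' : Complex.normSq b < 1 := by
      rw [← Complex.sq_norm] at *; nlinarith [norm_nonneg b]
    have hz' : Complex.normSq z < 1 := by
      rw [← Complex.sq_norm] at *; nlinarith [norm_nonneg z]
    nlinarith
  have := Real.sqrt_lt_sqrt (Complex.normSq_nonneg _) key
  simpa [Complex.norm_def] using this

lemma hMob_mapsTo {b : ℂ} (hb : ‖b‖ < 1) :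
    MapsTo (hMob b) unitDisc unitDisc := by
  intro z hz
  rw [mem_unitDisc] at *
  exact hMob_abs_lt hb hz

lemma hMob_diffOn {b : ℂ} (hb : ‖b‖ < 1) :
    DifferentiableOn ℂ (hMob b) unitDisc := by
  apply DifferentiableOn.div
  · exact (differentiable_id.sub_const b).differentiableOn
  · exact (differentiable_const _ |>.sub ((differentiable_const _).mul differentiable_id)).differentiableOn
  · intro z hz
    exact one_sub_conj_mul_ne_zero hb (mem_unitDisc.mp hz)

lemma hMob_inv {b z : ℂ} (hb : ‖b‖ < 1) (hz : ‖z‖ < 1) :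
    hMob (-b) (hMob b z) = z := by
  have h1 := one_sub_conj_mul_ne_zero hb hz
  have h2 := one_sub_conj_mul_ne_zero hb hb
  have h2' : (1 : ℂ) - b * (starRingEnd ℂ) b ≠ 0 := by
    rw [mul_comm]; exact h2
  simp only [hMob, map_neg]
  have h3 : 1 - -(starRingEnd ℂ) b * ((z - b) / (1 - (starRingEnd ℂ) b * z)) = (1 - (starRingEnd ℂ) b * b) / (1 - (starRingEnd ℂ) b * z) := by
    field_simp; ring
  rw [h3, div_div_eq_mul_div, div_eq_iff h2, sub_neg_eq_add, div_add' _ _ _ h1, div_mul_cancel₀ _ h1]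
  ring

lemma hMob_self (b : ℂ) : hMob b b = 0 := by simp [hMob]

lemma hMob_zero (b : ℂ) : hMob (-b) 0 = b := by simp [hMob]

lemma hMob_hasDerivAt {b z : ℂ} (h : 1 - (starRingEnd ℂ) b * z ≠ 0) :
    HasDerivAt (hMob b) ((1 - (starRingEnd ℂ) b * b) / (1 - (starRingEnd ℂ) b * z) ^ 2) z := by
  have h1 : HasDerivAt (fun w : ℂ => w - b) 1 z := (hasDerivAt_id z).sub_const b
  have h2 : HasDerivAt (fun w : ℂ => 1 - (starRingEnd ℂ) b * w) (-((starRingEnd ℂ) b)) z := by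
    simpa using ((hasDerivAt_id z).const_mul ((starRingEnd ℂ) b)).const_sub 1
  have := h1.div h2 h
  refine (this : HasDerivAt (hMob b) _ z).congr_deriv ?_
  ring

theorem aux16 (c : ℝ) (hc : c ∈ Set.Ioo (-1 : ℝ) 0) (a : ℂ) (ha : a ∈ unitDisc)
    (haR : a.im ≠ 0) (φ : ℂ → ℂ) (hφ : IsDiscAut φ)
    (hval₁ : φ a = hMob (c : ℂ) a) (hval₂ : φ (hMob (c : ℂ) a) = a)
    (ε : ℂ) (hε : ε = 1 ∨ ε = -1)
    (h : deriv φ a = ε * deriv (hMob (c : ℂ)) a) : False := by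
  obtain ⟨hφd, hφm, χ, hχd, hχm, hlχ, hrχ⟩ := hφ
  have hconjC : (starRingEnd ℂ) (c : ℂ) = (c : ℂ) := Complex.conj_ofReal c
  have hCabs : ‖(c : ℂ)‖ < 1 := by
    rw [Complex.norm_real, Real.norm_eq_abs, abs_lt]; exact ⟨hc.1, hc.2.trans zero_lt_one⟩
  have hCne : (c : ℂ) ≠ 0 := Complex.ofReal_ne_zero.mpr hc.2.ne
  have haabs : ‖a‖ < 1 := mem_unitDisc.mp ha
  set w := hMob (c : ℂ) a with hwdef
  have hwabs : ‖w‖ < 1 := hMob_abs_lt hCabs haabs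
  have hwE : w ∈ unitDisc := mem_unitDisc.mpr hwabs
  have hnegaabs : ‖-a‖ < 1 := by rwa [norm_neg]
  have hnegwabs : ‖-w‖ < 1 := by rwa [norm_neg]
  set f : ℂ → ℂ := fun z => hMob w (φ (hMob (-a) z)) with hfdef
  set g : ℂ → ℂ := fun z => hMob a (χ (hMob (-w) z)) with hgdef
  have hfmaps : MapsTo f unitDisc unitDisc := fun z hz =>
    hMob_mapsTo hwabs (hφm (hMob_mapsTo hnegaabs hz))
  have hgmaps : MapsTo g unitDisc unitDisc := fun z hz =>
    hMob_mapsTo haabs (hχm (hMob_mapsTo hnegwabs hz))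
  have hfd : DifferentiableOn ℂ f unitDisc :=
    (hMob_diffOn hwabs).comp (hφd.comp (hMob_diffOn hnegaabs) (hMob_mapsTo hnegaabs))
      (fun z hz => hφm (hMob_mapsTo hnegaabs hz))
  have hgd : DifferentiableOn ℂ g unitDisc :=
    (hMob_diffOn haabs).comp (hχd.comp (hMob_diffOn hnegwabs) (hMob_mapsTo hnegwabs))
      (fun z hz => hχm (hMob_mapsTo hnegwabs hz))
  have hf0 : f 0 = 0 := by
    simp only [hfdef]
    rw [hMob_zero, hval₁, hMob_self]
  have hg0 : g 0 = 0 := by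
    simp only [hgdef]
    rw [hMob_zero, show χ w = a from by rw [← hval₁, hlχ a ha], hMob_self]
  have hgf : ∀ z ∈ unitDisc, g (f z) = z := by
    intro z hz
    have h1 : hMob (-a) z ∈ unitDisc := hMob_mapsTo hnegaabs hz
    have h2 : φ (hMob (-a) z) ∈ unitDisc := hφm h1
    simp only [hfdef, hgdef]
    rw [hMob_inv hwabs (mem_unitDisc.mp h2), hlχ _ h1]
    have := hMob_inv hnegaabs (mem_unitDisc.mp hz)
    rwa [neg_neg] at this
  have h0E : (0 : ℂ) ∈ unitDisc := mem_unitDisc.mpr (by simp)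
  have hopen : IsOpen unitDisc := isOpen_ball
  have hfda : DifferentiableAt ℂ f 0 := hfd.differentiableAt (hopen.mem_nhds h0E)
  have hgda : DifferentiableAt ℂ g 0 := hgd.differentiableAt (hopen.mem_nhds h0E)
  have hderiv1 : deriv g 0 * deriv f 0 = 1 := by
    have hev : (g ∘ f) =ᶠ[nhds (0 : ℂ)] id := by
      filter_upwards [hopen.mem_nhds h0E] with z hz using hgf z hz
    have hcomp : deriv (g ∘ f) 0 = deriv g (f 0) * deriv f 0 :=
      deriv_comp 0 (by rw [hf0]; exact hgda) hfda
    rw [hf0] at hcomp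
    rw [← hcomp, hev.deriv_eq, deriv_id]
  have hfmaps' : MapsTo f (ball 0 1) (ball (f 0) 1) := by rw [hf0]; exact hfmaps
  have hgmaps' : MapsTo g (ball 0 1) (ball (g 0) 1) := by rw [hg0]; exact hgmaps
  have hSf : ‖deriv f 0‖ ≤ 1 :=
    Complex.norm_deriv_le_one_of_mapsTo_ball hfd (hfmaps'.mono_right ball_subset_closedBall) one_pos
  have hSg : ‖deriv g 0‖ ≤ 1 :=
    Complex.norm_deriv_le_one_of_mapsTo_ball hgd (hgmaps'.mono_right ball_subset_closedBall) one_pos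
  have habsf : ‖deriv f 0‖ = 1 := by
    have hprod : ‖deriv g 0‖ * ‖deriv f 0‖ = 1 := by
      rw [← norm_mul, hderiv1, norm_one]
    nlinarith [norm_nonneg (deriv f 0), norm_nonneg (deriv g 0)]
  set lam := deriv f 0 with hlamdef
  have hlin : EqOn f (fun z => f 0 + (z - 0) • dslope f 0 0) (ball 0 1) :=
    Complex.affine_of_mapsTo_ball_of_exists_norm_dslope_eq_div hfd (hfmaps'.mono_right ball_subset_closedBall)
      (mem_ball_self one_pos) (by rw [dslope_same]; simpa using habsf)
  have hflin : ∀ z ∈ unitDisc, f z = lam * z := by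
    intro z hz
    have := hlin hz
    simp only [hf0, dslope_same, smul_eq_mul, sub_zero, zero_add] at this
    rw [this, mul_comm]
  have hawE : hMob a w ∈ unitDisc := hMob_mapsTo haabs hwE
  have heqlam : lam * hMob a w = hMob w a := by
    have h1 := hflin _ hawE
    simp only [hfdef] at h1
    rw [hMob_inv haabs hwabs, hval₂] at h1
    exact h1.symm
  -- derivative of φ at a
  have denAA : 1 - (starRingEnd ℂ) a * a ≠ 0 := one_sub_conj_mul_ne_zero haabs haabs
  have hEqφ : ∀ z ∈ unitDisc, φ z = hMob (-w) (lam * hMob a z) := by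
    intro z hz
    have h1 : hMob a z ∈ unitDisc := hMob_mapsTo haabs hz
    rw [← hflin _ h1]
    simp only [hfdef]
    rw [hMob_inv haabs (mem_unitDisc.mp hz)]
    exact (hMob_inv hwabs (mem_unitDisc.mp (hφm hz))).symm
  have hφev : φ =ᶠ[nhds a] (fun z => hMob (-w) (lam * hMob a z)) := by
    filter_upwards [hopen.mem_nhds ha] with z hz using hEqφ z hz
  have houterden : 1 - (starRingEnd ℂ) (-w) * (lam * hMob a a) ≠ 0 := by
    rw [hMob_self]; simp
  have hderφcalc : HasDerivAt (fun z => hMob (-w) (lam * hMob a z))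
      (((1 - (starRingEnd ℂ) (-w) * (-w)) / (1 - (starRingEnd ℂ) (-w) * (lam * hMob a a)) ^ 2) *
        (lam * ((1 - (starRingEnd ℂ) a * a) / (1 - (starRingEnd ℂ) a * a) ^ 2))) a := by
    have hinner : HasDerivAt (fun z => lam * hMob a z)
        (lam * ((1 - (starRingEnd ℂ) a * a) / (1 - (starRingEnd ℂ) a * a) ^ 2)) a :=
      (hMob_hasDerivAt denAA).const_mul lam
    have houter := hMob_hasDerivAt (b := -w) houterden
    exact houter.comp a hinner
  have e7 : deriv φ a * (1 - (starRingEnd ℂ) a * a) = (1 - (starRingEnd ℂ) w * w) * lam := by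
    rw [hφev.deriv_eq, hderφcalc.deriv, hMob_self]
    simp only [map_neg, mul_zero, sub_zero, one_pow, div_one, neg_mul, neg_neg, sub_neg_eq_add]
    field_simp
    ring
  have hderψ : deriv (hMob (c : ℂ)) a = (1 - (c:ℂ)*(c:ℂ)) / (1 - (c:ℂ)*a) ^ 2 := by
    have hden : 1 - (starRingEnd ℂ) (c:ℂ) * a ≠ 0 := one_sub_conj_mul_ne_zero hCabs haabs
    rw [(hMob_hasDerivAt hden).deriv, hconjC]
  -- algebraic endgame
  have hBabs : ‖(starRingEnd ℂ) a‖ < 1 := by rwa [Complex.norm_conj]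
  have dCA : (1 : ℂ) - (c:ℂ) * a ≠ 0 := one_sub_mul_ne_zero hCabs haabs
  have dCB : (1 : ℂ) - (c:ℂ) * (starRingEnd ℂ) a ≠ 0 := one_sub_mul_ne_zero hCabs hBabs
  have dBw : (1 : ℂ) - (starRingEnd ℂ) a * w ≠ 0 := one_sub_conj_mul_ne_zero haabs hwabs
  have dWA : (1 : ℂ) - (starRingEnd ℂ) w * a ≠ 0 := one_sub_conj_mul_ne_zero hwabs haabs
  have hA2 : (1 : ℂ) - a * a ≠ 0 := one_sub_mul_ne_zero haabs haabs
  have hC2 : (1 : ℂ) - (c:ℂ) * (c:ℂ) ≠ 0 := one_sub_mul_ne_zero hCabs hCabs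
  have e1 : w * (1 - (c:ℂ) * a) = a - (c:ℂ) := by
    rw [hwdef, hMob, hconjC]
    exact div_mul_cancel₀ _ dCA
  have e2 : (starRingEnd ℂ) w * (1 - (c:ℂ) * (starRingEnd ℂ) a) = (starRingEnd ℂ) a - (c:ℂ) := by
    have := congrArg (starRingEnd ℂ) e1
    simpa [map_mul, map_sub, map_one, Complex.conj_ofReal] using this
  have e6 : lam * (w - a) * (1 - (starRingEnd ℂ) w * a)
      = (a - w) * (1 - (starRingEnd ℂ) a * w) := by
    have h1 := heqlam
    rw [show hMob a w = (w - a) / (1 - (starRingEnd ℂ) a * w) from rfl,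
      show hMob w a = (a - w) / (1 - (starRingEnd ℂ) w * a) from rfl] at h1
    rw [mul_div_assoc', div_eq_div_iff dBw dWA] at h1
    linear_combination h1
  have e8 : ε * (1 - (c:ℂ)*(c:ℂ)) * (1 - (starRingEnd ℂ) a * a)
      = (1 - (starRingEnd ℂ) w * w) * lam * (1 - (c:ℂ)*a) ^ 2 := by
    rw [h, hderψ] at e7
    field_simp [dCA] at e7
    linear_combination e7
  have e9 : ε * (1 - (c:ℂ)*(c:ℂ)) * (1 - (starRingEnd ℂ) a * a) * (w - a) * (1 - (starRingEnd ℂ) w * a)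
      = (1 - (starRingEnd ℂ) w * w) * (1 - (c:ℂ)*a) ^ 2 * (a - w) * (1 - (starRingEnd ℂ) a * w) := by
    linear_combination ((w - a) * (1 - (starRingEnd ℂ) w * a)) * e8
      + ((1 - (starRingEnd ℂ) w * w) * (1 - (c:ℂ)*a) ^ 2) * e6
  have e9' : ε * (1 - (c:ℂ)*(c:ℂ)) * (1 - (starRingEnd ℂ) a * a) * ((w - a) * (1 - (c:ℂ)*a))
        * ((1 - (starRingEnd ℂ) w * a) * (1 - (c:ℂ) * (starRingEnd ℂ) a))
      = ((1 - (starRingEnd ℂ) w * w) * ((1 - (c:ℂ)*a) * (1 - (c:ℂ) * (starRingEnd ℂ) a)))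
        * ((a - w) * (1 - (c:ℂ)*a)) * ((1 - (starRingEnd ℂ) a * w) * (1 - (c:ℂ)*a)) := by
    linear_combination ((1 - (c:ℂ)*a) * (1 - (c:ℂ) * (starRingEnd ℂ) a)) * e9
  have m1 : (w - a) * (1 - (c:ℂ)*a) = -((c:ℂ) * (1 - a * a)) := by linear_combination e1
  have m2 : (1 - (starRingEnd ℂ) w * a) * (1 - (c:ℂ) * (starRingEnd ℂ) a)
      = (1 - (starRingEnd ℂ) a * a) + (c:ℂ) * (a - (starRingEnd ℂ) a) := by
    linear_combination (-a) * e2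
  have m3 : (1 - (starRingEnd ℂ) w * w) * ((1 - (c:ℂ)*a) * (1 - (c:ℂ) * (starRingEnd ℂ) a))
      = (1 - (c:ℂ)*(c:ℂ)) * (1 - (starRingEnd ℂ) a * a) := by
    linear_combination (-((starRingEnd ℂ) w * (1 - (c:ℂ) * (starRingEnd ℂ) a))) * e1
      + (-(a - (c:ℂ))) * e2
  have m4 : (a - w) * (1 - (c:ℂ)*a) = (c:ℂ) * (1 - a * a) := by linear_combination -e1
  have m5 : (1 - (starRingEnd ℂ) a * w) * (1 - (c:ℂ)*a)
      = (1 - (starRingEnd ℂ) a * a) - (c:ℂ) * (a - (starRingEnd ℂ) a) := by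
    linear_combination (-(starRingEnd ℂ) a) * e1
  rw [m1, m2, m3, m4, m5] at e9'
  rcases hε with rfl | rfl
  · have hz : (1 - (c:ℂ)*(c:ℂ)) * ((c:ℂ) * (1 - a * a)) * (1 - (starRingEnd ℂ) a * a)
        * (2 * (1 - (starRingEnd ℂ) a * a)) = 0 := by
      linear_combination -e9'
    exact (mul_ne_zero (mul_ne_zero (mul_ne_zero hC2 (mul_ne_zero hCne hA2)) denAA)
      (mul_ne_zero two_ne_zero denAA)) hz
  · have hane : a - (starRingEnd ℂ) a ≠ 0 :=
      sub_ne_zero.mpr (fun hh => haR (Complex.conj_eq_iff_im.mp hh.symm))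
    have hz : (1 - (c:ℂ)*(c:ℂ)) * ((c:ℂ) * (1 - a * a)) * (1 - (starRingEnd ℂ) a * a)
        * (2 * ((c:ℂ) * (a - (starRingEnd ℂ) a))) = 0 := by
      linear_combination e9'
    exact (mul_ne_zero (mul_ne_zero (mul_ne_zero hC2 (mul_ne_zero hCne hA2)) denAA)
      (mul_ne_zero two_ne_zero (mul_ne_zero hCne hane))) hz

/-- For `c ∈ (-1,0)`, `ψ := h_c`, and `a ∈ E \\ ℝ`, any automorphism `φ` of `E` with
`φ(a) = ψ(a)` and `φ(ψ(a)) = a` satisfies `φ'(a) ≠ ψ'(a)` and `φ'(a) ≠ -ψ'(a)`. -/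
theorem stmt16 (c : ℝ) (hc : c ∈ Set.Ioo (-1 : ℝ) 0) (a : ℂ) (ha : a ∈ unitDisc)
    (haR : a.im ≠ 0) (φ : ℂ → ℂ) (hφ : IsDiscAut φ)
    (hval₁ : φ a = hMob (c : ℂ) a) (hval₂ : φ (hMob (c : ℂ) a) = a) :
    deriv φ a ≠ deriv (hMob (c : ℂ)) a ∧ deriv φ a ≠ -deriv (hMob (c : ℂ)) a := by
  constructor
  · intro h
    exact aux16 c hc a ha haR φ hφ hval₁ hval₂ 1 (Or.inl rfl) (by rw [h, one_mul])
  · intro h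
    exact aux16 c hc a ha haR φ hφ hval₁ hval₂ (-1) (Or.inr rfl) (by rw [h]; ring)
end
end

section
/- Let D₂ ⊆ ℂ be a domain, let θ ∈ (0,1), and let f = (f₁,f₂) : E → ℂ∗ × D₂ be holomorphic with f₁(0) = 1, f₂'(0) ≠ 0, and θ·f₁'(0) ≠ 1 (and arbitrary values otherwise). Let M := max{|f₂(z)| : |z| ≤ θ} and choose k ∈ ℕ with |c_k| > M, where c_k := f₂(0) − k·θ·f₂'(0)/(θ·f₁'(0) − 1). Define h(z) := (f₂(θz) − c_k)/(f₂(0) − c_k), g₁(z) := (1+z)·h(z)^k and g(z) := (g₁(z), f₂(θz)). Then g is an injective holomorphic map from E to ℂ∗ × D₂ with g(0) = f(0) and g'(0) = θ·f'(0). -/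
open Set Metric Complex

noncomputable section

/-- The injectivity construction for `ℂ∗ × D₂` in the remaining case of
Proposition 3: with `M := max {|f₂(z)| : |z| ≤ θ}`,
`c_k := f₂(0) - k·θ·f₂'(0)/(θ·f₁'(0) - 1)` with `|c_k| > M`,
`h(z) := (f₂(θz) - c_k)/(f₂(0) - c_k)`, `g₁(z) := (1+z)·h(z)^k`, and
`g := (g₁, f₂(θ·))`, the map `g` is an injective holomorphic map `E → ℂ∗ × D₂`
with `g(0) = f(0)` and `g'(0) = θ·f'(0)`. -/
theorem stmt17 (D₂ : Set ℂ) (hD₂ : IsOpen D₂ ∧ IsConnected D₂)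
    (θ : ℝ) (hθ : θ ∈ Set.Ioo (0 : ℝ) 1) (f₁ f₂ : ℂ → ℂ)
    (hf₁ : DifferentiableOn ℂ f₁ unitDisc) (hf₂ : DifferentiableOn ℂ f₂ unitDisc)
    (hf₁m : MapsTo f₁ unitDisc {(0 : ℂ)}ᶜ) (hf₂m : MapsTo f₂ unitDisc D₂)
    (hf₁0 : f₁ 0 = 1) (hf₂' : deriv f₂ 0 ≠ 0) (hf₁' : (θ : ℂ) * deriv f₁ 0 ≠ 1)
    (M : ℝ) (hM : M = sSup ((fun z => ‖f₂ z‖) '' Metric.closedBall 0 θ))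
    (k : ℕ) (c : ℂ)
    (hc : c = f₂ 0 - (k : ℂ) * ((θ : ℂ) * deriv f₂ 0) / ((θ : ℂ) * deriv f₁ 0 - 1))
    (hk : M < ‖c‖)
    (g : ℂ → ℂ × ℂ)
    (hg : g = fun z =>
      ((1 + z) * ((f₂ ((θ : ℂ) * z) - c) / (f₂ 0 - c))^k, f₂ ((θ : ℂ) * z))) :
    DifferentiableOn ℂ g unitDisc ∧ InjOn g unitDisc ∧
      MapsTo g unitDisc ({(0 : ℂ)}ᶜ ×ˢ D₂) ∧ g 0 = (f₁ 0, f₂ 0) ∧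
      deriv g 0 = ((θ : ℂ) * deriv f₁ 0, (θ : ℂ) * deriv f₂ 0) := by
  obtain ⟨hθ0, hθ1⟩ := hθ
  have hden : (θ : ℂ) * deriv f₁ 0 - 1 ≠ 0 := sub_ne_zero.mpr hf₁'
  have hθC : (θ : ℂ) ≠ 0 := by exact_mod_cast ne_of_gt hθ0
  have hsub : Metric.closedBall (0:ℂ) θ ⊆ unitDisc := by
    simpa [unitDisc] using Metric.closedBall_subset_ball hθ1
  -- membership facts
  have hmem : ∀ z ∈ unitDisc, (θ : ℂ) * z ∈ Metric.closedBall (0:ℂ) θ := by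
    intro z hz
    simp only [unitDisc, Metric.mem_ball, dist_zero_right] at hz
    simp only [Metric.mem_closedBall, dist_zero_right, norm_mul, Complex.norm_real,
      Real.norm_eq_abs, abs_of_pos hθ0]
    nlinarith [norm_nonneg z]
  have hmem' : ∀ z ∈ unitDisc, (θ : ℂ) * z ∈ unitDisc := fun z hz => hsub (hmem z hz)
  -- bound by M
  have hcont : ContinuousOn (fun z => ‖f₂ z‖) (Metric.closedBall (0:ℂ) θ) :=
    continuous_norm.comp_continuousOn (hf₂.continuousOn.mono hsub)
  have hbdd : BddAbove ((fun z => ‖f₂ z‖) '' Metric.closedBall (0:ℂ) θ) :=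
    ((isCompact_closedBall _ _).image_of_continuousOn hcont).bddAbove
  have hMle : ∀ w ∈ Metric.closedBall (0:ℂ) θ, ‖f₂ w‖ ≤ M := by
    intro w hw
    rw [hM]
    exact le_csSup hbdd ⟨w, hw, rfl⟩
  have h0mem : (0:ℂ) ∈ Metric.closedBall (0:ℂ) θ := by
    simp [Metric.mem_closedBall, le_of_lt hθ0]
  have h0disc : (0:ℂ) ∈ unitDisc := by simp [unitDisc]
  have hne : ∀ z ∈ unitDisc, f₂ ((θ:ℂ)*z) ≠ c := by
    intro z hz h
    have := hMle _ (hmem z hz)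
    rw [h] at this
    linarith
  have hd : f₂ 0 - c ≠ 0 := by
    have : f₂ 0 ≠ c := by
      intro h
      have := hMle 0 h0mem
      rw [h] at this
      linarith
    exact sub_ne_zero.mpr this
  have hkne : (k:ℂ) ≠ 0 := by
    have : k ≠ 0 := by
      intro h
      subst h
      exact hd (by simp [hc])
    exact_mod_cast this
  -- differentiability of z ↦ f₂ (θ z)
  have hFdiff : DifferentiableOn ℂ (fun z => f₂ ((θ:ℂ)*z)) unitDisc :=
    hf₂.comp ((differentiable_id.const_mul _).differentiableOn) hmem'
  -- derivative facts at 0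
  have hf₂at : HasDerivAt f₂ (deriv f₂ 0) 0 :=
    (hf₂.differentiableAt (Metric.isOpen_ball.mem_nhds h0disc)).hasDerivAt
  have hlin : HasDerivAt (fun z : ℂ => (θ:ℂ)*z) (θ:ℂ) 0 := by
    simpa using (hasDerivAt_id (0:ℂ)).const_mul (θ:ℂ)
  have hF0 : HasDerivAt (fun z => f₂ ((θ:ℂ)*z)) ((θ:ℂ) * deriv f₂ 0) 0 := by
    have h' : HasDerivAt f₂ (deriv f₂ 0) ((θ:ℂ)*0) := by rwa [mul_zero]
    have h := h'.comp 0 hlin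
    rw [mul_comm]
    exact h
  have hh : HasDerivAt (fun z => (f₂ ((θ:ℂ)*z) - c)/(f₂ 0 - c))
      (((θ:ℂ) * deriv f₂ 0)/(f₂ 0 - c)) 0 := (hF0.sub_const c).div_const _
  have h1z : HasDerivAt (fun z : ℂ => 1 + z) 1 0 := by
    simpa using (hasDerivAt_id (0:ℂ)).const_add (1:ℂ)
  have hg1 : HasDerivAt (fun z => (1 + z) * ((f₂ ((θ:ℂ)*z) - c)/(f₂ 0 - c))^k)
      ((θ:ℂ) * deriv f₁ 0) 0 := by
    have := h1z.mul (hh.pow k)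
    refine this.congr_deriv ?_; symm; simp only [Pi.pow_apply]
    have hval : (f₂ ((θ:ℂ)*0) - c)/(f₂ 0 - c) = 1 := by
      rw [mul_zero, div_self hd]
    rw [hval]
    have hdval : f₂ 0 - c = (k : ℂ) * ((θ : ℂ) * deriv f₂ 0) / ((θ : ℂ) * deriv f₁ 0 - 1) := by
      rw [hc]; ring
    rw [hdval]
    field_simp
    ring
  have hderivg : deriv g 0 = ((θ : ℂ) * deriv f₁ 0, (θ : ℂ) * deriv f₂ 0) := by
    rw [hg]
    exact (hg1.prodMk hF0).deriv
  refine ⟨?_, ?_, ?_, ?_, hderivg⟩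
  · rw [hg]
    exact DifferentiableOn.prodMk
      (((differentiableOn_const _).add differentiableOn_id).mul
        (((hFdiff.sub_const c).div_const _).pow k)) hFdiff
  · intro z hz w hw hgw
    rw [hg] at hgw
    have h2 : f₂ ((θ:ℂ)*z) = f₂ ((θ:ℂ)*w) := congrArg Prod.snd hgw
    have h1 : (1 + z) * ((f₂ ((θ:ℂ)*z) - c)/(f₂ 0 - c))^k
        = (1 + w) * ((f₂ ((θ:ℂ)*z) - c)/(f₂ 0 - c))^k := by
      have := congrArg Prod.fst hgw
      simpa [h2] using this
    have hq : ((f₂ ((θ:ℂ)*z) - c)/(f₂ 0 - c))^k ≠ 0 :=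
      pow_ne_zero _ (div_ne_zero (sub_ne_zero.mpr (hne z hz)) hd)
    exact add_left_cancel (mul_right_cancel₀ hq h1)
  · intro z hz
    rw [hg]
    constructor
    · simp only [Set.mem_compl_iff, Set.mem_singleton_iff]
      exact mul_ne_zero (by
        intro h
        have : z = -1 := by linear_combination h
        rw [this] at hz
        simp [unitDisc] at hz
        ) (pow_ne_zero _ (div_ne_zero (sub_ne_zero.mpr (hne z hz)) hd))
    · exact hf₂m (hmem' z hz)
  · rw [hg]
    simp [div_self hd, hf₁0]
end
end

section
/- Let D₁, D₂ ⊆ ℂ be domains, θ ∈ (0,1), and f = (f₁,f₂) : E → D₁ × D₂ holomorphic with f₁'(0) = 0. Let 0 < d < dist(f₁(0), ∂D₁), assume f₂'(0) ≠ 0, and define h(z) := (f₂(θz) − f₂(0))/f₂'(0), M := max{|h(z)| : z ∈ closure(E)}, g₁(z) := f₁(0) + (d/(M+1))·(h(z) − θz), and g(z) := (g₁(z), f₂(θz)). Then g is an injective holomorphic map from E to D₁ × D₂ with g(0) = f(0) and g'(0) = θ·f'(0). -/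
open Set Metric Complex

noncomputable section

lemma aux_mem_of_dist_lt {s : Set ℂ} (hs : IsOpen s) {x y : ℂ} (hx : x ∈ s)
    (hxy : dist y x < Metric.infDist x (frontier s)) : y ∈ s := by
  set r := Metric.infDist x (frontier s) with hr
  have hball : Metric.ball x r ⊆ s := by
    have hpre : IsPreconnected (Metric.ball x r) := (convex_ball x r).isPreconnected
    refine hpre.subset_left_of_subset_union hs isClosed_closure.isOpen_compl
      (disjoint_compl_right.mono_left subset_closure) ?_
      ⟨x, Metric.mem_ball_self (dist_nonneg.trans_lt hxy), hx⟩
    intro z hz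
    by_contra hzc
    simp only [mem_union, not_or, mem_compl_iff, not_not] at hzc
    have hzf : z ∈ frontier s := ⟨hzc.2, by rw [hs.interior_eq]; exact hzc.1⟩
    have : r ≤ dist x z := Metric.infDist_le_dist_of_mem hzf
    rw [dist_comm] at this
    exact absurd (Metric.mem_ball.1 hz) (not_lt.2 this)
  exact hball (Metric.mem_ball.2 hxy)

/-- The injectivity construction in the case `f₁'(0) = 0` of Proposition 2: with
`0 < d < dist(f₁(0), ∂D₁)`, `h(z) := (f₂(θz) - f₂(0))/f₂'(0)`,
`M := max {|h(z)| : z ∈ closure E}`,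
`g₁(z) := f₁(0) + (d/(M+1))·(h(z) - θz)`, and `g := (g₁, f₂(θ·))`, the map `g` is
an injective holomorphic map `E → D₁ × D₂` with `g(0) = f(0)` and `g'(0) = θ·f'(0)`. -/
theorem stmt18 (D₁ D₂ : Set ℂ) (hD₁ : IsOpen D₁ ∧ IsConnected D₁)
    (hD₂ : IsOpen D₂ ∧ IsConnected D₂)
    (θ : ℝ) (hθ : θ ∈ Set.Ioo (0 : ℝ) 1) (f₁ f₂ : ℂ → ℂ)
    (hf₁ : DifferentiableOn ℂ f₁ unitDisc) (hf₂ : DifferentiableOn ℂ f₂ unitDisc)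
    (hf₁m : MapsTo f₁ unitDisc D₁) (hf₂m : MapsTo f₂ unitDisc D₂)
    (hf₁' : deriv f₁ 0 = 0) (hf₂' : deriv f₂ 0 ≠ 0)
    (d : ℝ) (hd0 : 0 < d) (hd : d < Metric.infDist (f₁ 0) (frontier D₁))
    (h : ℂ → ℂ) (hh : h = fun z => (f₂ ((θ : ℂ) * z) - f₂ 0) / deriv f₂ 0)
    (M : ℝ) (hM : M = sSup ((fun z => ‖h z‖) '' Metric.closedBall 0 1))
    (g : ℂ → ℂ × ℂ)
    (hg : g = fun z =>
      (f₁ 0 + ((d / (M + 1) : ℝ) : ℂ) * (h z - (θ : ℂ) * z), f₂ ((θ : ℂ) * z))) :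
    DifferentiableOn ℂ g unitDisc ∧ InjOn g unitDisc ∧
      MapsTo g unitDisc (D₁ ×ˢ D₂) ∧ g 0 = (f₁ 0, f₂ 0) ∧
      deriv g 0 = ((θ : ℂ) * deriv f₁ 0, (θ : ℂ) * deriv f₂ 0) := by
  obtain ⟨hθ0, hθ1⟩ := hθ
  have hopen : IsOpen unitDisc := Metric.isOpen_ball
  have h0mem : (0 : ℂ) ∈ unitDisc := Metric.mem_ball_self one_pos
  -- θ*z lands in unitDisc for z in the closed unit ball
  have hmemc : ∀ z ∈ Metric.closedBall (0 : ℂ) 1, (θ : ℂ) * z ∈ unitDisc := by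
    intro z hz
    rw [mem_closedBall_zero_iff] at hz
    rw [unitDisc, mem_ball_zero_iff, norm_mul, Complex.norm_real, Real.norm_eq_abs,
      abs_of_pos hθ0]
    calc θ * ‖z‖ ≤ θ * 1 := by nlinarith
      _ < 1 := by linarith
  have hmemo : ∀ z ∈ unitDisc, (θ : ℂ) * z ∈ unitDisc := fun z hz =>
    hmemc z (Metric.ball_subset_closedBall hz)
  -- F = f₂ ∘ (θ * ·)
  set F : ℂ → ℂ := fun z => f₂ ((θ : ℂ) * z) with hF
  have hFdiffc : DifferentiableOn ℂ F (Metric.closedBall 0 1) :=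
    hf₂.comp ((differentiable_id.const_mul _).differentiableOn) hmemc
  have hFdiff : DifferentiableOn ℂ F unitDisc :=
    hFdiffc.mono Metric.ball_subset_closedBall
  have hhdiffc : DifferentiableOn ℂ h (Metric.closedBall 0 1) := by
    rw [hh]; exact (hFdiffc.sub_const _).div_const _
  have hhdiff : DifferentiableOn ℂ h unitDisc :=
    hhdiffc.mono Metric.ball_subset_closedBall
  -- M is an upper bound and nonneg
  have hbdd : BddAbove ((fun z => ‖h z‖) '' Metric.closedBall 0 1) :=
    (isCompact_closedBall 0 1).bddAbove_image
      (continuous_norm.comp_continuousOn hhdiffc.continuousOn)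
  have hMle : ∀ z ∈ Metric.closedBall (0 : ℂ) 1, ‖h z‖ ≤ M := by
    intro z hz; rw [hM]; exact le_csSup hbdd ⟨z, hz, rfl⟩
  have hh0 : h 0 = 0 := by rw [hh]; simp
  have hM0 : 0 ≤ M := by
    have := hMle 0 (Metric.mem_closedBall_self one_pos.le)
    rw [hh0] at this; simpa using this
  have hM1 : (0 : ℝ) < M + 1 := by linarith
  set c : ℝ := d / (M + 1) with hc
  have hc0 : 0 < c := div_pos hd0 hM1
  have hcC : ((c : ℂ)) ≠ 0 := by
    simpa using ne_of_gt hc0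
  -- differentiability of g
  have hg1diff : DifferentiableOn ℂ (fun z => f₁ 0 + (c : ℂ) * (h z - (θ : ℂ) * z)) unitDisc :=
    (((hhdiff.sub ((differentiable_id.const_mul _).differentiableOn)).const_mul
      _).const_add _)
  have hgdiff : DifferentiableOn ℂ
      (fun z => (f₁ 0 + (c : ℂ) * (h z - (θ : ℂ) * z), F z)) unitDisc :=
    hg1diff.prodMk hFdiff
  refine ⟨by rw [hg]; exact hgdiff, ?_, ?_, ?_, ?_⟩
  · -- injectivity
    intro a ha b hb heq
    simp only [hg, Prod.mk.injEq] at heq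
    have e2 : f₂ ((θ:ℂ) * a) = f₂ ((θ:ℂ) * b) := heq.2
    have eh : h a = h b := by simp only [hh]; rw [e2]
    have e1 : (c : ℂ) * (h a - (θ : ℂ) * a) = (c : ℂ) * (h b - (θ : ℂ) * b) :=
      add_left_cancel heq.1
    have e3 : h a - (θ : ℂ) * a = h b - (θ : ℂ) * b := mul_left_cancel₀ hcC e1
    have e4 : (θ : ℂ) * a = (θ : ℂ) * b := by rw [eh] at e3; linear_combination -e3
    exact mul_left_cancel₀ (by exact_mod_cast ne_of_gt hθ0) e4
  · -- maps to
    intro z hz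
    have hz1 : z ∈ Metric.closedBall (0 : ℂ) 1 := Metric.ball_subset_closedBall hz
    simp only [hg, Set.mem_prod]
    refine ⟨?_, ?_⟩
    · show f₁ 0 + (c : ℂ) * (h z - (θ : ℂ) * z) ∈ D₁
      refine aux_mem_of_dist_lt hD₁.1 (hf₁m h0mem) ?_
      have hdist : dist (f₁ 0 + (c : ℂ) * (h z - (θ : ℂ) * z)) (f₁ 0)
          = c * ‖h z - (θ : ℂ) * z‖ := by
        rw [dist_eq, add_sub_cancel_left, norm_mul]
        simp [abs_of_pos hc0]
      have habs : ‖h z - (θ : ℂ) * z‖ < M + 1 := by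
        calc ‖h z - (θ : ℂ) * z‖
            ≤ ‖h z‖ + ‖(θ : ℂ) * z‖ := by
              simpa using norm_sub_le (h z) ((θ:ℂ)*z)
          _ ≤ M + θ := by
              refine add_le_add (hMle z hz1) ?_
              rw [norm_mul, Complex.norm_real, Real.norm_eq_abs, abs_of_pos hθ0]
              have : ‖z‖ ≤ 1 := by
                rw [← mem_closedBall_zero_iff]; exact hz1
              nlinarith
          _ < M + 1 := by linarith
      have : c * ‖h z - (θ : ℂ) * z‖ < c * (M + 1) := by
        exact mul_lt_mul_of_pos_left habs hc0
      rw [hdist]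
      have hcd : c * (M + 1) = d := by rw [hc, div_mul_cancel₀ d hM1.ne']
      linarith
    · exact hf₂m (hmemo z hz)
  · simp only [hg]
    simp [hh0]
  · -- derivative
    have hd2 : HasDerivAt f₂ (deriv f₂ 0) 0 :=
      (hf₂.differentiableAt (hopen.mem_nhds h0mem)).hasDerivAt
    have hlin : HasDerivAt (fun z : ℂ => (θ : ℂ) * z) (θ : ℂ) 0 := by
      simpa using (hasDerivAt_id (0:ℂ)).const_mul (θ : ℂ)
    have hdF : HasDerivAt F (deriv f₂ 0 * (θ : ℂ)) 0 := by
      have : HasDerivAt f₂ (deriv f₂ 0) ((θ:ℂ) * 0) := by simpa using hd2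
      exact HasDerivAt.comp 0 this hlin
    have hdh : HasDerivAt h ((deriv f₂ 0 * (θ : ℂ)) / deriv f₂ 0) 0 := by
      rw [hh]; exact (hdF.sub_const _).div_const _
    have hdh' : HasDerivAt h (θ : ℂ) 0 := by
      convert hdh using 1
      field_simp
    have hdg1 : HasDerivAt (fun z => f₁ 0 + (c : ℂ) * (h z - (θ : ℂ) * z)) 0 0 := by
      have : HasDerivAt (fun z => f₁ 0 + (c : ℂ) * (h z - (θ : ℂ) * z))
          ((c : ℂ) * ((θ : ℂ) - (θ : ℂ))) 0 := ((hdh'.sub hlin).const_mul _).const_add _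
      simpa using this
    have hdg : HasDerivAt (fun z => (f₁ 0 + (c : ℂ) * (h z - (θ : ℂ) * z), F z))
        (((0 : ℂ), deriv f₂ 0 * (θ : ℂ))) 0 := hdg1.prodMk hdF
    rw [hg, hdg.deriv, hf₁']
    simp [mul_comm]
end
end
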